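/- Under the su(N) generator hypotheses, the Dirac matrices in the Dirac representation, and the Grassmann setup, the exchange-type sixth-order Fierz identity holds: Σ_{i₁,i₂,i₃ ∈ Fin N} B 1 i₁ i₁ * B 1 i₂ i₃ * B 1 i₃ i₂ = −(1/4) • ⟪1⟫ * ⟪1⟫ * ⟪1⟫ − (1/4) • ⟪1⟫ * ⟪γ5⟫ * ⟪γ5⟫ + (1/4) • Σ_{μ} ε μ • ⟪1⟫ * ⟪γ5 * γ μ⟫ * ⟪γ5 * γ μ⟫ − (1/4) • Σ_{μ} ε μ • ⟪1⟫ * ⟪γ μ⟫ * ⟪γ μ⟫ − (1/8) • Σ_{μ,ν} ε μ · ε ν • ⟪1⟫ * ⟪σ μ ν⟫ * ⟪σ μ ν⟫, where μ, ν range over Fin 4. -/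

import Mathlib

noncomputable section

open Complex Matrix

/-- The Dirac γ-matrices in the Dirac representation. -/
def γm : Fin 4 → Matrix (Fin 4) (Fin 4) ℂ :=
  ![!![1,0,0,0; 0,1,0,0; 0,0,-1,0; 0,0,0,-1],
    !![0,0,0,1; 0,0,1,0; 0,-1,0,0; -1,0,0,0],
    !![0,0,0,-I; 0,0,I,0; 0,I,0,0; -I,0,0,0],
    !![0,0,1,0; 0,0,0,-1; -1,0,0,0; 0,1,0,0]]

/-- γ⁵ = i·γ⁰γ¹γ²γ³. -/
def γ5 : Matrix (Fin 4) (Fin 4) ℂ := I • (γm 0 * γm 1 * γm 2 * γm 3)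

/-- σ^{μν} = (i/2)[γ^μ, γ^ν]. -/
def σm (μ ν : Fin 4) : Matrix (Fin 4) (Fin 4) ℂ := (I / 2) • (γm μ * γm ν - γm ν * γm μ)

/-- The metric signs ε 0 = 1, ε 1 = ε 2 = ε 3 = −1 used to raise/lower indices. -/
def εs : Fin 4 → ℤ := ![1, -1, -1, -1]

/-- The totally antisymmetric Levi-Civita symbol on four indices,
normalized by ε₄ 0 1 2 3 = 1. -/
def ε4 (κ l μ ν : Fin 4) : ℤ :=
  Matrix.det (Matrix.of fun p q : Fin 4 => if ![κ, l, μ, ν] p = q then (1 : ℤ) else 0)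

/-- The Grassmann algebra generated by the 8N fermion components:
the exterior algebra of the direct sum of two copies of (Fin 4 × Fin N) → ℂ. -/
abbrev GrassAlg (N : ℕ) :=
  ExteriorAlgebra ℂ (((Fin 4 × Fin N) → ℂ) × ((Fin 4 × Fin N) → ℂ))

/-- ψ (A, i): the image in the Grassmann algebra of the standard basis vector
of the first summand indexed by (A, i). -/
def ψv (N : ℕ) (A : Fin 4) (i : Fin N) : GrassAlg N :=
  ExteriorAlgebra.ι ℂ (Pi.single (A, i) 1, 0)

/-- ψ̄ (A, i): the image in the Grassmann algebra of the standard basis vector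
of the second summand indexed by (A, i). -/
def ψbar (N : ℕ) (A : Fin 4) (i : Fin N) : GrassAlg N :=
  ExteriorAlgebra.ι ℂ (0, Pi.single (A, i) 1)

/-- The fermion bilinear B Γ i j = ∑_{A,B} Γ A B · ψ̄ (A,i) ψ (B,j). -/
def Bgr (N : ℕ) (Γ : Matrix (Fin 4) (Fin 4) ℂ) (i j : Fin N) : GrassAlg N :=
  ∑ A : Fin 4, ∑ B : Fin 4, Γ A B • (ψbar N A i * ψv N B j)

/-- ⟪Γ, X⟫ = ∑_{i,j} X i j · B Γ i j, the bilinear with Dirac structure Γ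
and color structure X. -/
def pairing (N : ℕ) (Γ : Matrix (Fin 4) (Fin 4) ℂ)
    (X : Matrix (Fin N) (Fin N) ℂ) : GrassAlg N :=
  ∑ i : Fin N, ∑ j : Fin N, X i j • Bgr N Γ i j

/-- ⟪Γ⟫ = ⟪Γ, 1⟫, the color-singlet bilinear. -/
def sing (N : ℕ) (Γ : Matrix (Fin 4) (Fin 4) ℂ) : GrassAlg N := pairing N Γ 1


/-! ### Explicit forms of the Dirac structures -/

lemma γ5_eq : γ5 = !![0,0,1,0; 0,0,0,1; 1,0,0,0; 0,1,0,0] := by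
  ext i j
  fin_cases i <;> fin_cases j <;>
    simp [γ5, γm, Matrix.mul_apply, Fin.sum_univ_four] <;>
      norm_num [Matrix.vecHead, Matrix.vecTail] <;> ring_nf <;> norm_num [Complex.I_sq]

lemma g5g0 : γ5 * γm 0 = !![0,0,-1,0; 0,0,0,-1; 1,0,0,0; 0,1,0,0] := by
  rw [γ5_eq]; ext i j
  fin_cases i <;> fin_cases j <;>
    simp [γm, Matrix.mul_apply, Fin.sum_univ_four] <;>
      norm_num [Matrix.vecHead, Matrix.vecTail] <;> ring_nf <;> norm_num [Complex.I_sq]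

lemma g5g1 : γ5 * γm 1 = !![0,-1,0,0; -1,0,0,0; 0,0,0,1; 0,0,1,0] := by
  rw [γ5_eq]; ext i j
  fin_cases i <;> fin_cases j <;>
    simp [γm, Matrix.mul_apply, Fin.sum_univ_four] <;>
      norm_num [Matrix.vecHead, Matrix.vecTail] <;> ring_nf <;> norm_num [Complex.I_sq]

lemma g5g2 : γ5 * γm 2 = !![0,I,0,0; -I,0,0,0; 0,0,0,-I; 0,0,I,0] := by
  rw [γ5_eq]; ext i j
  fin_cases i <;> fin_cases j <;>
    simp [γm, Matrix.mul_apply, Fin.sum_univ_four] <;>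
      norm_num [Matrix.vecHead, Matrix.vecTail] <;> ring_nf <;> norm_num [Complex.I_sq]

lemma g5g3 : γ5 * γm 3 = !![-1,0,0,0; 0,1,0,0; 0,0,1,0; 0,0,0,-1] := by
  rw [γ5_eq]; ext i j
  fin_cases i <;> fin_cases j <;>
    simp [γm, Matrix.mul_apply, Fin.sum_univ_four] <;>
      norm_num [Matrix.vecHead, Matrix.vecTail] <;> ring_nf <;> norm_num [Complex.I_sq]

lemma σ01 : σm 0 1 = !![0,0,0,I; 0,0,I,0; 0,I,0,0; I,0,0,0] := by
  ext i j
  fin_cases i <;> fin_cases j <;>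
    simp [σm, γm, Matrix.mul_apply, Fin.sum_univ_four] <;>
      norm_num [Matrix.vecHead, Matrix.vecTail] <;> ring_nf <;> norm_num [Complex.I_sq]

lemma σ02 : σm 0 2 = !![0,0,0,1; 0,0,-1,0; 0,1,0,0; -1,0,0,0] := by
  ext i j
  fin_cases i <;> fin_cases j <;>
    simp [σm, γm, Matrix.mul_apply, Fin.sum_univ_four] <;>
      norm_num [Matrix.vecHead, Matrix.vecTail] <;> ring_nf <;> norm_num [Complex.I_sq]

lemma σ03 : σm 0 3 = !![0,0,I,0; 0,0,0,-I; I,0,0,0; 0,-I,0,0] := by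
  ext i j
  fin_cases i <;> fin_cases j <;>
    simp [σm, γm, Matrix.mul_apply, Fin.sum_univ_four] <;>
      norm_num [Matrix.vecHead, Matrix.vecTail] <;> ring_nf <;> norm_num [Complex.I_sq]

lemma σ12 : σm 1 2 = !![1,0,0,0; 0,-1,0,0; 0,0,1,0; 0,0,0,-1] := by
  ext i j
  fin_cases i <;> fin_cases j <;>
    simp [σm, γm, Matrix.mul_apply, Fin.sum_univ_four] <;>
      norm_num [Matrix.vecHead, Matrix.vecTail] <;> ring_nf <;> norm_num [Complex.I_sq]

lemma σ13 : σm 1 3 = !![0,I,0,0; -I,0,0,0; 0,0,0,I; 0,0,-I,0] := by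
  ext i j
  fin_cases i <;> fin_cases j <;>
    simp [σm, γm, Matrix.mul_apply, Fin.sum_univ_four] <;>
      norm_num [Matrix.vecHead, Matrix.vecTail] <;> ring_nf <;> norm_num [Complex.I_sq]

lemma σ23 : σm 2 3 = !![0,1,0,0; 1,0,0,0; 0,0,0,1; 0,0,1,0] := by
  ext i j
  fin_cases i <;> fin_cases j <;>
    simp [σm, γm, Matrix.mul_apply, Fin.sum_univ_four] <;>
      norm_num [Matrix.vecHead, Matrix.vecTail] <;> ring_nf <;> norm_num [Complex.I_sq]

lemma σm_diag (μ : Fin 4) : σm μ μ = 0 := by simp [σm]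

lemma σm_antisymm (μ ν : Fin 4) : σm ν μ = -σm μ ν := by
  rw [σm, σm, ← smul_neg, neg_sub]

/-! ### The completeness (Fierz) relation for the sixteen Dirac structures -/

set_option maxHeartbeats 16000000 in
lemma completeness (A B C D : Fin 4) :
    (1 : Matrix (Fin 4) (Fin 4) ℂ) A B * (1 : Matrix (Fin 4) (Fin 4) ℂ) C D =
      (-(1/4) : ℂ) * -((1 : Matrix (Fin 4) (Fin 4) ℂ) A D *
          (1 : Matrix (Fin 4) (Fin 4) ℂ) C B)
      + (-(1/4) : ℂ) * -(γ5 A D * γ5 C B)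
      + (1/4 : ℂ) * ∑ μ, (εs μ : ℂ) * -((γ5 * γm μ) A D * (γ5 * γm μ) C B)
      + (-(1/4) : ℂ) * ∑ μ, (εs μ : ℂ) * -(γm μ A D * γm μ C B)
      + (-(1/8) : ℂ) * ∑ μ, ∑ ν, ((εs μ : ℂ) * (εs ν : ℂ)) *
          -(σm μ ν A D * σm μ ν C B) := by
  simp only [Fin.sum_univ_four, σm_diag, σm_antisymm 0 1, σm_antisymm 0 2, σm_antisymm 0 3,
    σm_antisymm 1 2, σm_antisymm 1 3, σm_antisymm 2 3,
    g5g0, g5g1, g5g2, g5g3, σ01, σ02, σ03, σ12, σ13, σ23]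
  simp only [γ5_eq]
  fin_cases A <;> fin_cases B <;> fin_cases C <;> fin_cases D <;>
    norm_num [γm, εs, Matrix.one_apply, Fin.ext_iff, Matrix.cons_val_three, Matrix.cons_val_two,
      Matrix.cons_val_one, Matrix.cons_val_zero] <;> ring_nf <;> norm_num [Complex.I_sq]

/-! ### Grassmann algebra machinery -/

section Grass
variable {N : ℕ}

lemma ι_anti (x y : ((Fin 4 × Fin N) → ℂ) × ((Fin 4 × Fin N) → ℂ)) :
    ExteriorAlgebra.ι ℂ x * ExteriorAlgebra.ι ℂ y =
      -(ExteriorAlgebra.ι ℂ y * ExteriorAlgebra.ι ℂ x) :=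
  eq_neg_of_add_eq_zero_left (ExteriorAlgebra.ι_add_mul_swap x y)

lemma tri (b c d : ((Fin 4 × Fin N) → ℂ) × ((Fin 4 × Fin N) → ℂ)) :
    ExteriorAlgebra.ι ℂ b * ExteriorAlgebra.ι ℂ c * ExteriorAlgebra.ι ℂ d =
      -(ExteriorAlgebra.ι ℂ d * ExteriorAlgebra.ι ℂ c * ExteriorAlgebra.ι ℂ b) := by
  rw [ι_anti b c, neg_mul, mul_assoc, ι_anti b d, mul_neg, neg_neg, ← mul_assoc,
    ι_anti c d, neg_mul]

lemma quad (a b c d : ((Fin 4 × Fin N) → ℂ) × ((Fin 4 × Fin N) → ℂ)) :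
    ExteriorAlgebra.ι ℂ a * ExteriorAlgebra.ι ℂ b * ExteriorAlgebra.ι ℂ c *
        ExteriorAlgebra.ι ℂ d =
      -(ExteriorAlgebra.ι ℂ a * ExteriorAlgebra.ι ℂ d * ExteriorAlgebra.ι ℂ c *
        ExteriorAlgebra.ι ℂ b) := by
  rw [mul_assoc (ExteriorAlgebra.ι ℂ a), mul_assoc (ExteriorAlgebra.ι ℂ a), tri, mul_neg,
    ← mul_assoc, ← mul_assoc]

end Grass

/-- The basic quartic Grassmann monomial. -/
def Mono (N : ℕ) (i j : Fin N) (A B C D : Fin 4) : GrassAlg N :=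
  ψbar N A i * ψv N B j * ψbar N C j * ψv N D i

/-- A general quartic expression with coefficient kernel `K`. -/
def EE (N : ℕ) (K : Fin 4 → Fin 4 → Fin 4 → Fin 4 → ℂ) : GrassAlg N :=
  ∑ i : Fin N, ∑ j : Fin N, ∑ A : Fin 4, ∑ B : Fin 4, ∑ C : Fin 4, ∑ D : Fin 4,
    K A B C D • Mono N i j A B C D

lemma mono_swap (N : ℕ) (i j : Fin N) (A B C D : Fin 4) :
    ψbar N A i * ψv N B i * ψbar N C j * ψv N D j = -(Mono N i j A D C B) := by
  rw [Mono, ψbar, ψbar, ψv, ψv]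
  exact quad _ _ _ _

lemma Bgr_mul (N : ℕ) (Γ₁ Γ₂ : Matrix (Fin 4) (Fin 4) ℂ) (i j k l : Fin N) :
    Bgr N Γ₁ i j * Bgr N Γ₂ k l =
      ∑ A : Fin 4, ∑ B : Fin 4, ∑ C : Fin 4, ∑ D : Fin 4,
        (Γ₁ A B * Γ₂ C D) • (ψbar N A i * ψv N B j * ψbar N C k * ψv N D l) := by
  simp only [Bgr]
  rw [Finset.sum_mul]
  refine Finset.sum_congr rfl fun A _ => ?_
  rw [Finset.sum_mul]
  refine Finset.sum_congr rfl fun B _ => ?_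
  rw [Finset.mul_sum]
  refine Finset.sum_congr rfl fun C _ => ?_
  rw [Finset.mul_sum]
  refine Finset.sum_congr rfl fun D _ => ?_
  rw [smul_mul_smul_comm, ← mul_assoc]

lemma sing_eq (N : ℕ) (Γ : Matrix (Fin 4) (Fin 4) ℂ) :
    sing N Γ = ∑ i : Fin N, Bgr N Γ i i := by
  simp [sing, pairing, Matrix.one_apply, ite_smul, Finset.sum_ite_eq, one_smul, zero_smul]

lemma sum4_swap {M : Type*} [AddCommMonoid M] (f : Fin 4 → Fin 4 → Fin 4 → Fin 4 → M) :
    ∑ A : Fin 4, ∑ B : Fin 4, ∑ C : Fin 4, ∑ D : Fin 4, f A B C D =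
      ∑ A : Fin 4, ∑ B : Fin 4, ∑ C : Fin 4, ∑ D : Fin 4, f A D C B := by
  refine Finset.sum_congr rfl fun A _ => ?_
  calc ∑ B : Fin 4, ∑ C : Fin 4, ∑ D : Fin 4, f A B C D
      = ∑ C : Fin 4, ∑ B : Fin 4, ∑ D : Fin 4, f A B C D := Finset.sum_comm
    _ = ∑ C : Fin 4, ∑ D : Fin 4, ∑ B : Fin 4, f A B C D :=
        Finset.sum_congr rfl fun C _ => Finset.sum_comm
    _ = ∑ B : Fin 4, ∑ C : Fin 4, ∑ D : Fin 4, f A D C B := Finset.sum_comm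

lemma hsq (N : ℕ) (Γ : Matrix (Fin 4) (Fin 4) ℂ) :
    sing N Γ * sing N Γ = EE N (fun A B C D => -(Γ A D * Γ C B)) := by
  rw [sing_eq, Finset.sum_mul_sum, EE]
  refine Finset.sum_congr rfl fun i _ => Finset.sum_congr rfl fun j _ => ?_
  rw [Bgr_mul]
  calc ∑ A : Fin 4, ∑ B : Fin 4, ∑ C : Fin 4, ∑ D : Fin 4,
        (Γ A B * Γ C D) • (ψbar N A i * ψv N B i * ψbar N C j * ψv N D j)
      = ∑ A : Fin 4, ∑ B : Fin 4, ∑ C : Fin 4, ∑ D : Fin 4,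
          (-(Γ A B * Γ C D)) • Mono N i j A D C B := by
        simp only [mono_swap, smul_neg, neg_smul]
    _ = ∑ A : Fin 4, ∑ B : Fin 4, ∑ C : Fin 4, ∑ D : Fin 4,
          (-(Γ A D * Γ C B)) • Mono N i j A B C D :=
        sum4_swap (fun A B C D => (-(Γ A B * Γ C D)) • Mono N i j A D C B)

lemma hS (N : ℕ) :
    ∑ i : Fin N, ∑ j : Fin N, Bgr N 1 i j * Bgr N 1 j i =
      EE N (fun A B C D =>
        (1 : Matrix (Fin 4) (Fin 4) ℂ) A B * (1 : Matrix (Fin 4) (Fin 4) ℂ) C D) := by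
  rw [EE]
  exact Finset.sum_congr rfl fun i _ => Finset.sum_congr rfl fun j _ => Bgr_mul N 1 1 i j j i

lemma EE_add (N : ℕ) (K₁ K₂ : Fin 4 → Fin 4 → Fin 4 → Fin 4 → ℂ) :
    EE N (fun A B C D => K₁ A B C D + K₂ A B C D) = EE N K₁ + EE N K₂ := by
  simp [EE, add_smul, Finset.sum_add_distrib]

lemma EE_mul (N : ℕ) (c : ℂ) (K : Fin 4 → Fin 4 → Fin 4 → Fin 4 → ℂ) :
    EE N (fun A B C D => c * K A B C D) = c • EE N K := by
  simp [EE, mul_smul, Finset.smul_sum]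

lemma EE_fsum (N : ℕ) {m : Type*} (s : Finset m)
    (K : m → Fin 4 → Fin 4 → Fin 4 → Fin 4 → ℂ) :
    EE N (fun A B C D => ∑ μ ∈ s, K μ A B C D) = ∑ μ ∈ s, EE N (K μ) := by
  classical
  induction s using Finset.cons_induction with
  | empty => simp [EE]
  | cons a s ha ih =>
    simp only [Finset.sum_cons]
    rw [EE_add, ih]

lemma Skey (N : ℕ) :
    ∑ i : Fin N, ∑ j : Fin N, Bgr N 1 i j * Bgr N 1 j i =
      (-(1/4) : ℂ) • (sing N 1 * sing N 1)
      + (-(1/4) : ℂ) • (sing N γ5 * sing N γ5)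
      + (1/4 : ℂ) • ∑ μ, (εs μ : ℂ) • (sing N (γ5 * γm μ) * sing N (γ5 * γm μ))
      + (-(1/4) : ℂ) • ∑ μ, (εs μ : ℂ) • (sing N (γm μ) * sing N (γm μ))
      + (-(1/8) : ℂ) • ∑ μ, ∑ ν, ((εs μ : ℂ) * (εs ν : ℂ)) •
          (sing N (σm μ ν) * sing N (σm μ ν)) := by
  rw [hS]
  rw [show (fun A B C D =>
        (1 : Matrix (Fin 4) (Fin 4) ℂ) A B * (1 : Matrix (Fin 4) (Fin 4) ℂ) C D) =
      fun A B C D =>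
      (-(1/4) : ℂ) * -((1 : Matrix (Fin 4) (Fin 4) ℂ) A D *
          (1 : Matrix (Fin 4) (Fin 4) ℂ) C B)
      + (-(1/4) : ℂ) * -(γ5 A D * γ5 C B)
      + (1/4 : ℂ) * ∑ μ, (εs μ : ℂ) * -((γ5 * γm μ) A D * (γ5 * γm μ) C B)
      + (-(1/4) : ℂ) * ∑ μ, (εs μ : ℂ) * -(γm μ A D * γm μ C B)
      + (-(1/8) : ℂ) * ∑ μ, ∑ ν, ((εs μ : ℂ) * (εs ν : ℂ)) *
          -(σm μ ν A D * σm μ ν C B) from funext fun A => funext fun B => funext fun C =>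
            funext fun D => completeness A B C D]
  simp only [EE_add, EE_mul, EE_fsum, ← hsq]


/-- **Exchange-type sixth-order Fierz identity.** -/
theorem fierz6_exchange (N : ℕ) (hN : 2 ≤ N)
    (T : Fin (N ^ 2 - 1) → Matrix (Fin N) (Fin N) ℂ)
    (htr : ∀ a, (T a).trace = 0)
    (hherm : ∀ a, (T a)ᴴ = T a)
    (horth : ∀ a b, (T a * T b).trace = if a = b then (1 / 2 : ℂ) else 0) :
    ∑ i₁ : Fin N, ∑ i₂ : Fin N, ∑ i₃ : Fin N,
        Bgr N 1 i₁ i₁ * Bgr N 1 i₂ i₃ * Bgr N 1 i₃ i₂ =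
      (-(1 / 4) : ℂ) • (sing N 1 * sing N 1 * sing N 1)
        - (1 / 4 : ℂ) • (sing N 1 * sing N γ5 * sing N γ5)
        + (1 / 4 : ℂ) • ∑ μ, (εs μ : ℂ) •
            (sing N 1 * sing N (γ5 * γm μ) * sing N (γ5 * γm μ))
        - (1 / 4 : ℂ) • ∑ μ, (εs μ : ℂ) • (sing N 1 * sing N (γm μ) * sing N (γm μ))
        - (1 / 8 : ℂ) • ∑ μ, ∑ ν, ((εs μ : ℂ) * (εs ν : ℂ)) •
            (sing N 1 * sing N (σm μ ν) * sing N (σm μ ν)) := by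
  have hL : ∑ i₁ : Fin N, ∑ i₂ : Fin N, ∑ i₃ : Fin N,
      Bgr N 1 i₁ i₁ * Bgr N 1 i₂ i₃ * Bgr N 1 i₃ i₂ =
      sing N 1 * ∑ i : Fin N, ∑ j : Fin N, Bgr N 1 i j * Bgr N 1 j i := by
    rw [sing_eq, Finset.sum_mul]
    refine Finset.sum_congr rfl fun i₁ _ => ?_
    rw [Finset.mul_sum]
    refine Finset.sum_congr rfl fun i₂ _ => ?_
    rw [Finset.mul_sum]
    exact Finset.sum_congr rfl fun i₃ _ => mul_assoc _ _ _
  rw [hL, Skey]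
  simp only [mul_add, mul_neg, Finset.mul_sum, mul_smul_comm, mul_assoc,
    sub_eq_add_neg, neg_smul]
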